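/- A map 𝒱 : [0,1] → [0,1] has the v-transform properties with some fulcrum δ ∈ (0,1) if and only if there exist δ ∈ (0,1) and a continuous strictly increasing distribution function Ψ on [0,1] (Ψ continuous, strictly increasing, Ψ(0)=0, Ψ(1)=1) such that 𝒱(u) = (1−u) − (1−δ)·Ψ(u/δ) for u ≤ δ and 𝒱(u) = u − δ·Ψ⁻¹((1−u)/(1−δ)) for u > δ. -/

import Mathlib

/-!
STATEMENT 0: characterization of v-transforms.  A map `V : [0,1] → [0,1]` has the
v-transform properties with some fulcrum `δ ∈ (0,1)` iff it has the two-branch form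
built from a continuous strictly increasing distribution function `Ψ` on `[0,1]`.
-/

open Set

/-- `V` has the v-transform properties with fulcrum `δ`:
it maps `[0,1]` to `[0,1]`, `V 0 = V 1 = 1`, `V δ = 0`, `V` is continuous,
strictly decreasing on `[0,δ]`, strictly increasing on `[δ,1]`, and every
`u ∈ [0,1] \ {δ}` has a dual point `u*` on the opposite side of the fulcrum with
`V u* = V u` and `|u* - u| = V u` (square property). -/
def IsVTransform (V : ℝ → ℝ) (δ : ℝ) : Prop :=
  δ ∈ Ioo (0:ℝ) 1 ∧
  MapsTo V (Icc 0 1) (Icc 0 1) ∧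
  V 0 = 1 ∧ V 1 = 1 ∧ V δ = 0 ∧
  ContinuousOn V (Icc 0 1) ∧
  StrictAntiOn V (Icc 0 δ) ∧
  StrictMonoOn V (Icc δ 1) ∧
  ∀ u ∈ Icc (0:ℝ) 1, u ≠ δ →
    ∃ us ∈ Icc (0:ℝ) 1, ((u < δ ∧ δ < us) ∨ (us < δ ∧ δ < u)) ∧
      V us = V u ∧ |us - u| = V u

private lemma fwd (V : ℝ → ℝ) (h : ∃ δ, IsVTransform V δ) :
      ∃ δ ∈ Ioo (0:ℝ) 1, ∃ Ψ Ψinv : ℝ → ℝ,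
        ContinuousOn Ψ (Icc 0 1) ∧ StrictMonoOn Ψ (Icc 0 1) ∧
        Ψ 0 = 0 ∧ Ψ 1 = 1 ∧
        (∀ x ∈ Icc (0:ℝ) 1, Ψinv (Ψ x) = x ∧ Ψ (Ψinv x) = x) ∧
        ∀ u ∈ Icc (0:ℝ) 1,
          (u ≤ δ → V u = (1 - u) - (1 - δ) * Ψ (u / δ)) ∧
          (δ < u → V u = u - δ * Ψinv ((1 - u) / (1 - δ))) := by
  obtain ⟨δ, hδ, hmaps, h0, h1, hδ0, hcont, hanti, hmono, hsq⟩ := h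
  obtain ⟨hδpos, hδlt1⟩ := hδ
  have h1δ : (0:ℝ) < 1 - δ := by linarith
  -- dual point lemmas
  have dualL : ∀ u, 0 ≤ u → u < δ →
      δ < u + V u ∧ u + V u ≤ 1 ∧ V (u + V u) = V u := by
    intro u hu0 huδ
    obtain ⟨us, hus, hside, hVus, habs⟩ :=
      hsq u ⟨hu0, (huδ.trans hδlt1).le⟩ (ne_of_lt huδ)
    rcases hside with ⟨_, h2⟩ | ⟨_, h2⟩
    · have hd : us - u = V u := by
        rw [← habs, abs_of_pos]; linarith
      have hus_eq : u + V u = us := by linarith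
      rw [hus_eq]
      exact ⟨h2, hus.2, hVus⟩
    · exact absurd huδ (not_lt.mpr h2.le)
  have dualR : ∀ u, u ≤ 1 → δ < u →
      0 ≤ u - V u ∧ u - V u < δ ∧ V (u - V u) = V u := by
    intro u hu1 hδu
    obtain ⟨us, hus, hside, hVus, habs⟩ :=
      hsq u ⟨(hδpos.trans hδu).le, hu1⟩ (ne_of_gt hδu)
    rcases hside with ⟨h1', _⟩ | ⟨h1', _⟩
    · exact absurd hδu (not_lt.mpr h1'.le)
    · have hd : u - us = V u := by
        rw [← habs, abs_of_neg (by linarith : us - u < 0)]; ring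
      have hus_eq : u - V u = us := by linarith
      rw [hus_eq]
      exact ⟨hus.1, h1', hVus⟩
  -- key monotonicity via square property
  have keyM : ∀ u u', 0 ≤ u → u < u' → u' ≤ δ → u' + V u' < u + V u := by
    intro u u' h0u huu' hu'δ
    have huδ : u < δ := lt_of_lt_of_le huu' hu'δ
    obtain ⟨ha1, ha2, ha3⟩ := dualL u h0u huδ
    rcases eq_or_lt_of_le hu'δ with heq | hu'
    · rw [heq, hδ0]; linarith
    · obtain ⟨hb1, hb2, hb3⟩ := dualL u' (h0u.trans huu'.le) hu'
      have hVu : V u' < V u := hanti ⟨h0u, huδ.le⟩ ⟨h0u.trans huu'.le, hu'δ⟩ huu'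
      have hlt : V (u' + V u') < V (u + V u) := by rw [ha3, hb3]; exact hVu
      exact (hmono.lt_iff_lt ⟨hb1.le, hb2⟩ ⟨ha1.le, ha2⟩).mp hlt
  set Ψ : ℝ → ℝ := fun x => (1 - δ * x - V (δ * x)) / (1 - δ) with hΨdef
  set Ψinv : ℝ → ℝ := fun y => (1 - (1 - δ) * y - V (1 - (1 - δ) * y)) / δ with hΨinvdef
  have hΨ0 : Ψ 0 = 0 := by simp [hΨdef, h0]
  have hΨ1 : Ψ 1 = 1 := by
    simp only [hΨdef, mul_one, hδ0]
    field_simp; ring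
  refine ⟨δ, ⟨hδpos, hδlt1⟩, Ψ, Ψinv, ?_, ?_, hΨ0, hΨ1, ?_, ?_⟩
  · -- continuity of Ψ
    have hmapsδ : MapsTo (fun x : ℝ => δ * x) (Icc 0 1) (Icc 0 1) := by
      intro x hx
      show δ * x ∈ Icc (0:ℝ) 1
      exact ⟨mul_nonneg hδpos.le hx.1, by nlinarith [hx.1, hx.2]⟩
    have hcomp : ContinuousOn (fun x => V (δ * x)) (Icc 0 1) :=
      hcont.comp ((continuous_const.mul continuous_id).continuousOn) hmapsδ
    exact ((continuousOn_const.sub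
      ((continuous_const.mul continuous_id).continuousOn)).sub hcomp).div_const _
  · -- strict mono of Ψ
    intro x hx y hy hxy
    have h1 : δ * x < δ * y := by nlinarith
    have h2 : δ * y ≤ δ := by nlinarith [hy.2]
    have := keyM (δ * x) (δ * y) (mul_nonneg hδpos.le hx.1) h1 h2
    simp only [hΨdef]
    rw [div_lt_div_iff_of_pos_right h1δ]
    linarith
  · -- inverse properties
    intro x hx
    constructor
    · -- Ψinv (Ψ x) = x
      rcases eq_or_lt_of_le hx.2 with heq | hx1
      · rw [heq, hΨ1]
        show (1 - (1 - δ) * 1 - V (1 - (1 - δ) * 1)) / δ = 1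
        have : 1 - (1 - δ) * 1 = δ := by ring
        rw [this, hδ0]
        field_simp; ring
      · have hδx : δ * x < δ := by nlinarith
        obtain ⟨ha1, ha2, ha3⟩ := dualL (δ * x) (mul_nonneg hδpos.le hx.1) hδx
        have harg : 1 - (1 - δ) * Ψ x = δ * x + V (δ * x) := by
          simp only [hΨdef]; field_simp; ring
        show (1 - (1 - δ) * Ψ x - V (1 - (1 - δ) * Ψ x)) / δ = x
        rw [harg, ha3]
        field_simp; ring
    · -- Ψ (Ψinv x) = x
      rcases eq_or_lt_of_le hx.2 with heq | hx1
      · rw [heq]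
        have hI1 : Ψinv 1 = 1 := by
          show (1 - (1 - δ) * 1 - V (1 - (1 - δ) * 1)) / δ = 1
          have : 1 - (1 - δ) * 1 = δ := by ring
          rw [this, hδ0]; field_simp; ring
        rw [hI1, hΨ1]
      · set u := 1 - (1 - δ) * x with hu
        have hδu : δ < u := by simp only [hu]; nlinarith
        have hu1 : u ≤ 1 := by simp only [hu]; nlinarith [hx.1]
        obtain ⟨hb1, hb2, hb3⟩ := dualR u hu1 hδu
        have harg : δ * Ψinv x = u - V u := by
          simp only [hΨinvdef, ← hu]; field_simp
        show (1 - δ * Ψinv x - V (δ * Ψinv x)) / (1 - δ) = x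
        rw [harg, hb3]
        have : 1 - (u - V u) - V u = (1 - δ) * x := by simp only [hu]; ring
        rw [this]
        field_simp
  · -- formulas
    intro u hu
    constructor
    · intro huδ
      have hc : δ * (u / δ) = u := mul_div_cancel₀ u hδpos.ne'
      show V u = (1 - u) - (1 - δ) * ((1 - δ * (u / δ) - V (δ * (u / δ))) / (1 - δ))
      rw [hc]
      field_simp; ring
    · intro hδu
      have hc : 1 - (1 - δ) * ((1 - u) / (1 - δ)) = u := by field_simp; ring
      show V u = u - δ * ((1 - (1 - δ) * ((1 - u) / (1 - δ)) -
        V (1 - (1 - δ) * ((1 - u) / (1 - δ)))) / δ)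
      rw [hc]
      field_simp; ring

private lemma glueCont {f : ℝ → ℝ} {s t : Set ℝ} (hs : IsClosed s) (ht : IsClosed t)
    (h1 : ContinuousOn f s) (h2 : ContinuousOn f t) : ContinuousOn f (s ∪ t) := by
  intro x hx
  have hcs : ContinuousWithinAt f s x := by
    by_cases hxs : x ∈ s
    · exact h1 x hxs
    · exact continuousWithinAt_of_notMem_closure (by rwa [hs.closure_eq])
  have hct : ContinuousWithinAt f t x := by
    by_cases hxt : x ∈ t
    · exact h2 x hxt
    · exact continuousWithinAt_of_notMem_closure (by rwa [ht.closure_eq])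
  exact hcs.union hct

private lemma bwd (V : ℝ → ℝ)
    (h : ∃ δ ∈ Ioo (0:ℝ) 1, ∃ Ψ Ψinv : ℝ → ℝ,
        ContinuousOn Ψ (Icc 0 1) ∧ StrictMonoOn Ψ (Icc 0 1) ∧
        Ψ 0 = 0 ∧ Ψ 1 = 1 ∧
        (∀ x ∈ Icc (0:ℝ) 1, Ψinv (Ψ x) = x ∧ Ψ (Ψinv x) = x) ∧
        ∀ u ∈ Icc (0:ℝ) 1,
          (u ≤ δ → V u = (1 - u) - (1 - δ) * Ψ (u / δ)) ∧
          (δ < u → V u = u - δ * Ψinv ((1 - u) / (1 - δ)))) :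
    ∃ δ, IsVTransform V δ := by
  obtain ⟨δ, ⟨hδpos, hδlt1⟩, Ψ, Ψinv, hΨc, hΨm, hΨ0, hΨ1, hinv, hform⟩ := h
  have h1δ : (0:ℝ) < 1 - δ := by linarith
  have h01 : (0:ℝ) ∈ Icc (0:ℝ) 1 := ⟨le_refl 0, zero_le_one⟩
  have h11 : (1:ℝ) ∈ Icc (0:ℝ) 1 := ⟨zero_le_one, le_refl 1⟩
  -- basic facts about Ψ and Ψinv
  have hΨmem : ∀ x ∈ Icc (0:ℝ) 1, Ψ x ∈ Icc (0:ℝ) 1 := by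
    intro x hx
    constructor
    · rw [← hΨ0]; exact hΨm.monotoneOn h01 hx hx.1
    · rw [← hΨ1]; exact hΨm.monotoneOn hx h11 hx.2
  have hsurj : ∀ x ∈ Icc (0:ℝ) 1, ∃ y ∈ Icc (0:ℝ) 1, Ψ y = x := by
    intro x hx
    have hIVT := intermediate_value_Icc (zero_le_one (α := ℝ)) hΨc
    rw [hΨ0, hΨ1] at hIVT
    obtain ⟨y, hy, hΨy⟩ := hIVT hx
    exact ⟨y, hy, hΨy⟩
  have hImem : ∀ x ∈ Icc (0:ℝ) 1, Ψinv x ∈ Icc (0:ℝ) 1 := by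
    intro x hx
    obtain ⟨y, hy, rfl⟩ := hsurj x hx
    rw [(hinv y hy).1]; exact hy
  have hI0 : Ψinv 0 = 0 := by
    have := (hinv 0 h01).1; rwa [hΨ0] at this
  have hI1 : Ψinv 1 = 1 := by
    have := (hinv 1 h11).1; rwa [hΨ1] at this
  have hImono : StrictMonoOn Ψinv (Icc 0 1) := by
    intro x hx y hy hxy
    by_contra hcon
    push_neg at hcon
    have := hΨm.monotoneOn (hImem y hy) (hImem x hx) hcon
    rw [(hinv x hx).2, (hinv y hy).2] at this
    exact absurd hxy (not_lt.mpr this)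
  -- continuity of Ψinv via monotone surjective extension
  have hIc : ContinuousOn Ψinv (Icc 0 1) := by
    set g : ℝ → ℝ := fun x => if x < 0 then x else if x ≤ 1 then Ψinv x else x with hg
    have hgeq : EqOn Ψinv g (Icc 0 1) := by
      intro x hx
      simp only [hg]
      rw [if_neg (not_lt.mpr hx.1), if_pos hx.2]
    have hgval : ∀ x ∈ Icc (0:ℝ) 1, g x = Ψinv x := fun x hx => (hgeq hx).symm
    have hgmono : Monotone g := by
      intro x y hxy
      rcases lt_or_ge x 0 with hx0 | hx0
      · rcases lt_or_ge y 0 with hy0 | hy0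
        · simp only [hg, if_pos hx0, if_pos hy0]; exact hxy
        · rcases le_or_gt y 1 with hy1 | hy1
          · rw [show g x = x from by simp [hg, hx0], hgval y ⟨hy0, hy1⟩]
            have := (hImem y ⟨hy0, hy1⟩).1
            linarith
          · simp only [hg]
            rw [if_pos hx0, if_neg (not_lt.mpr hy0), if_neg (not_le.mpr hy1)]
            exact hxy
      · rcases le_or_gt x 1 with hx1 | hx1
        · have hy0 : (0:ℝ) ≤ y := hx0.trans hxy
          rcases le_or_gt y 1 with hy1 | hy1
          · rw [hgval x ⟨hx0, hx1⟩, hgval y ⟨hy0, hy1⟩]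
            rcases eq_or_lt_of_le hxy with rfl | hlt
            · exact le_refl _
            · exact (hImono ⟨hx0, hx1⟩ ⟨hy0, hy1⟩ hlt).le
          · rw [hgval x ⟨hx0, hx1⟩]
            simp only [hg]
            rw [if_neg (not_lt.mpr hy0), if_neg (not_le.mpr hy1)]
            have := (hImem x ⟨hx0, hx1⟩).2
            linarith
        · have hy1 : (1:ℝ) < y := hx1.trans_le hxy
          have hy0 : (0:ℝ) ≤ y := by linarith
          simp only [hg]
          rw [if_neg (not_lt.mpr hx0), if_neg (not_le.mpr hx1),
            if_neg (not_lt.mpr hy0), if_neg (not_le.mpr hy1)]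
          exact hxy
    have hgsurj : Function.Surjective g := by
      intro t
      rcases lt_or_ge t 0 with ht0 | ht0
      · exact ⟨t, by simp [hg, ht0]⟩
      · rcases le_or_gt t 1 with ht1 | ht1
        · refine ⟨Ψ t, ?_⟩
          rw [hgval (Ψ t) (hΨmem t ⟨ht0, ht1⟩)]
          exact (hinv t ⟨ht0, ht1⟩).1
        · refine ⟨t, ?_⟩
          simp only [hg]
          rw [if_neg (not_lt.mpr ht0), if_neg (not_le.mpr ht1)]
    exact ((hgmono.continuous_of_surjective hgsurj).continuousOn).congr hgeq
  -- branch formulas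
  have hV1 : ∀ u ∈ Icc (0:ℝ) δ, V u = (1 - u) - (1 - δ) * Ψ (u / δ) := by
    intro u hu
    exact (hform u ⟨hu.1, hu.2.trans hδlt1.le⟩).1 hu.2
  have hdiv1 : ∀ u, 0 ≤ u → u ≤ δ → u / δ ∈ Icc (0:ℝ) 1 := fun u h0 h1 =>
    ⟨div_nonneg h0 hδpos.le, (div_le_one hδpos).mpr h1⟩
  have hdiv2 : ∀ u, δ ≤ u → u ≤ 1 → (1 - u) / (1 - δ) ∈ Icc (0:ℝ) 1 := fun u ha hb =>
    ⟨div_nonneg (by linarith) h1δ.le, (div_le_one h1δ).mpr (by linarith)⟩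
  have hVδ : V δ = 0 := by
    rw [hV1 δ ⟨hδpos.le, le_refl δ⟩, div_self hδpos.ne', hΨ1]; ring
  have hV2 : ∀ u ∈ Icc δ 1, V u = u - δ * Ψinv ((1 - u) / (1 - δ)) := by
    intro u hu
    rcases eq_or_lt_of_le hu.1 with heq | hlt
    · rw [← heq, hVδ, div_self h1δ.ne', hI1]; ring
    · exact (hform u ⟨hδpos.le.trans hu.1, hu.2⟩).2 hlt
  have hanti : StrictAntiOn V (Icc 0 δ) := by
    intro x hx y hy hxy
    rw [hV1 x hx, hV1 y hy]
    have hm := hΨm (hdiv1 x hx.1 hx.2) (hdiv1 y hy.1 hy.2)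
      ((div_lt_div_iff_of_pos_right hδpos).mpr hxy)
    nlinarith
  have hmono : StrictMonoOn V (Icc δ 1) := by
    intro x hx y hy hxy
    rw [hV2 x hx, hV2 y hy]
    have harg : (1 - y) / (1 - δ) < (1 - x) / (1 - δ) :=
      (div_lt_div_iff_of_pos_right h1δ).mpr (by linarith)
    have hm := hImono (hdiv2 y hy.1 hy.2) (hdiv2 x hx.1 hx.2) harg
    nlinarith
  have hmaps : MapsTo V (Icc 0 1) (Icc 0 1) := by
    intro u hu
    rcases le_or_gt u δ with huδ | hδu
    · rw [hV1 u ⟨hu.1, huδ⟩]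
      have h := hΨmem _ (hdiv1 u hu.1 huδ)
      exact ⟨by nlinarith [h.2], by nlinarith [h.1, hu.1]⟩
    · rw [hV2 u ⟨hδu.le, hu.2⟩]
      have h := hImem _ (hdiv2 u hδu.le hu.2)
      exact ⟨by nlinarith [h.2], by nlinarith [h.1, hu.2]⟩
  have hV0 : V 0 = 1 := by
    rw [hV1 0 ⟨le_refl 0, hδpos.le⟩, zero_div, hΨ0]; ring
  have hV1' : V 1 = 1 := by
    rw [hV2 1 ⟨hδlt1.le, le_refl 1⟩, sub_self, zero_div, hI0]; ring
  have hcont : ContinuousOn V (Icc 0 1) := by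
    have hsplit : Icc (0:ℝ) 1 = Icc 0 δ ∪ Icc δ 1 :=
      (Icc_union_Icc_eq_Icc hδpos.le hδlt1.le).symm
    rw [hsplit]
    apply glueCont isClosed_Icc isClosed_Icc
    · refine ContinuousOn.congr (f := fun u => (1 - u) - (1 - δ) * Ψ (u / δ))
        ?_ (fun u hu => hV1 u hu)
      refine ContinuousOn.sub (continuous_const.sub continuous_id).continuousOn ?_
      refine continuousOn_const.mul (hΨc.comp (continuous_id.div_const δ).continuousOn ?_)
      exact fun u hu => hdiv1 u hu.1 hu.2
    · refine ContinuousOn.congr (f := fun u => u - δ * Ψinv ((1 - u) / (1 - δ)))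
        ?_ (fun u hu => hV2 u hu)
      refine ContinuousOn.sub continuous_id.continuousOn ?_
      refine continuousOn_const.mul (hIc.comp
        ((continuous_const.sub continuous_id).div_const (1 - δ)).continuousOn ?_)
      exact fun u hu => hdiv2 u hu.1 hu.2
  have hsq : ∀ u ∈ Icc (0:ℝ) 1, u ≠ δ →
      ∃ us ∈ Icc (0:ℝ) 1, ((u < δ ∧ δ < us) ∨ (us < δ ∧ δ < u)) ∧
        V us = V u ∧ |us - u| = V u := by
    intro u hu hne
    have hVu0 : 0 ≤ V u := (hmaps hu).1
    rcases lt_or_gt_of_ne hne with huδ | hδu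
    · have hVu := hV1 u ⟨hu.1, huδ.le⟩
      have hΨarg := hΨmem _ (hdiv1 u hu.1 huδ.le)
      have hΨlt : Ψ (u / δ) < 1 := by
        rw [← hΨ1]
        exact hΨm (hdiv1 u hu.1 huδ.le) h11 (by rw [div_lt_one hδpos]; exact huδ)
      have husval : u + V u = 1 - (1 - δ) * Ψ (u / δ) := by rw [hVu]; ring
      have hδus : δ < u + V u := by rw [husval]; nlinarith
      have hus1 : u + V u ≤ 1 := by rw [husval]; nlinarith [hΨarg.1]
      have harg : (1 - (u + V u)) / (1 - δ) = Ψ (u / δ) := by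
        rw [husval, sub_sub_cancel, mul_div_cancel_left₀ _ h1δ.ne']
      have hVus : V (u + V u) = V u := by
        rw [hV2 (u + V u) ⟨hδus.le, hus1⟩, harg, (hinv _ (hdiv1 u hu.1 huδ.le)).1,
          mul_div_cancel₀ u hδpos.ne']
        ring
      exact ⟨u + V u, ⟨by linarith, hus1⟩, Or.inl ⟨huδ, hδus⟩, hVus,
        by rw [add_sub_cancel_left, abs_of_nonneg hVu0]⟩
    · have hVu := hV2 u ⟨hδu.le, hu.2⟩
      have hy := hdiv2 u hδu.le hu.2
      have hIarg := hImem _ hy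
      have hIlt : Ψinv ((1 - u) / (1 - δ)) < 1 := by
        have h := hImono hy h11 (by rw [div_lt_one h1δ]; linarith)
        rwa [hI1] at h
      have husval : u - V u = δ * Ψinv ((1 - u) / (1 - δ)) := by rw [hVu]; ring
      have hus0 : 0 ≤ u - V u := by rw [husval]; nlinarith [hIarg.1]
      have husδ : u - V u < δ := by rw [husval]; nlinarith
      have harg : (u - V u) / δ = Ψinv ((1 - u) / (1 - δ)) := by
        rw [husval]; field_simp
      have hVus : V (u - V u) = V u := by
        rw [hV1 (u - V u) ⟨hus0, husδ.le⟩, harg, (hinv _ hy).2,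
          mul_div_cancel₀ (1 - u) h1δ.ne']
        ring
      refine ⟨u - V u, ⟨hus0, by linarith⟩, Or.inr ⟨husδ, hδu⟩, hVus, ?_⟩
      rw [show u - V u - u = -(V u) by ring, abs_neg, abs_of_nonneg hVu0]
  exact ⟨δ, ⟨hδpos, hδlt1⟩, hmaps, hV0, hV1', hVδ, hcont, hanti, hmono, hsq⟩

/-- **Theorem 1 (characterization of v-transforms).**  `V` has the v-transform
properties with some fulcrum `δ ∈ (0,1)` if and only if there are `δ ∈ (0,1)` and a
continuous, strictly increasing distribution function `Ψ` on `[0,1]`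
(with inverse `Ψinv`) such that `V u = (1-u) - (1-δ) * Ψ (u/δ)` for `u ≤ δ` and
`V u = u - δ * Ψinv ((1-u)/(1-δ))` for `u > δ`. -/
theorem stmt_0 (V : ℝ → ℝ) :
    (∃ δ, IsVTransform V δ) ↔
      ∃ δ ∈ Ioo (0:ℝ) 1, ∃ Ψ Ψinv : ℝ → ℝ,
        ContinuousOn Ψ (Icc 0 1) ∧ StrictMonoOn Ψ (Icc 0 1) ∧
        Ψ 0 = 0 ∧ Ψ 1 = 1 ∧
        (∀ x ∈ Icc (0:ℝ) 1, Ψinv (Ψ x) = x ∧ Ψ (Ψinv x) = x) ∧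
        ∀ u ∈ Icc (0:ℝ) 1,
          (u ≤ δ → V u = (1 - u) - (1 - δ) * Ψ (u / δ)) ∧
          (δ < u → V u = u - δ * Ψinv ((1 - u) / (1 - δ))) := by
  exact ⟨fwd V, bwd V⟩
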